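/- Symmetry of the one-variable reduction of the tetrahedron index: for all natural numbers a and b, the following identity holds in ℤ[[q]]: Σ_{n≥0} (−1)^n q^{n(n+1)/2 + bn} / ((q;q)_n (q;q)_{n+a}) = Σ_{n≥0} (−1)^n q^{n(n+1)/2 + an} / ((q;q)_n (q;q)_{n+b}). -/

import Mathlib

/-!
STATEMENT 10. Work in ℤ[[q]] (`PowerSeries ℤ`, with `q := PowerSeries.X`).
`(q;q)_n = ∏_{j=1}^n (1 - q^j)` is a unit of ℤ[[q]]; `Ring.inverse` yields its
inverse.  Infinite q-adic sums are encoded coefficientwise: every family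
`f : ℕ → ℤ[[q]]` occurring here has the q-order of `f n` at least `n`, so its
q-adic sum is the power series whose `d`-th coefficient is the (stabilized)
finite sum `∑_{k ≤ d} coeff d (f k)`; this is `SeriesSum f`.

The statement: for all natural numbers `a`, `b`,
`Σ_{n≥0} (−1)^n q^{n(n+1)/2 + bn} / ((q;q)_n (q;q)_{n+a})
   = Σ_{n≥0} (−1)^n q^{n(n+1)/2 + an} / ((q;q)_n (q;q)_{n+b})` in ℤ[[q]].
-/

noncomputable section
open PowerSeries

/-- `(q;q)_n = ∏_{j=1}^n (1 - q^j)`. -/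
def qPoch (n : ℕ) : PowerSeries ℤ :=
  ∏ j ∈ Finset.range n, (1 - (X : PowerSeries ℤ) ^ (j + 1))

/-- The q-adic sum of a family of power series whose `n`-th member has q-order `≥ n`. -/
def SeriesSum (f : ℕ → PowerSeries ℤ) : PowerSeries ℤ :=
  PowerSeries.mk fun d => ∑ k ∈ Finset.range (d + 1), coeff d (f k)

namespace Stmt10Aux
open Finset

abbrev R := PowerSeries ℤ

def T (n : ℕ) : ℕ := n * (n + 1) / 2

lemma qPoch_succ (n : ℕ) : qPoch (n+1) = qPoch n * (1 - (X : R)^(n+1)) :=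
  Finset.prod_range_succ _ _

lemma isUnit_one_sub_X_pow (m : ℕ) : IsUnit (1 - (X : R)^(m+1)) := by
  rw [PowerSeries.isUnit_iff_constantCoeff]; simp

lemma qPoch_isUnit (n : ℕ) : IsUnit (qPoch n) := by
  rw [PowerSeries.isUnit_iff_constantCoeff]
  unfold qPoch
  rw [map_prod]
  have : ∀ j ∈ Finset.range n, constantCoeff (1 - (X:R)^(j+1)) = 1 := by
    intro j _; simp
  rw [Finset.prod_congr rfl this]; simp

lemma inv_qPoch_mul (j : ℕ) :
    (1 - (X:R)^(j+1)) * Ring.inverse (qPoch (j+1)) = Ring.inverse (qPoch j) := by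
  rw [qPoch_succ, Ring.mul_inverse_rev, ← mul_assoc,
    Ring.mul_inverse_cancel _ (isUnit_one_sub_X_pow j), one_mul]

/-- the ideal `(X^(d+1))`. -/
def Imod (d : ℕ) : Ideal R := Ideal.span {(X:R)^(d+1)}

def φ (d : ℕ) : R →+* R ⧸ Imod d := Ideal.Quotient.mk (Imod d)

lemma phi_eq_of_dvd (d : ℕ) {x y : R} (h : (X:R)^(d+1) ∣ x - y) : φ d x = φ d y :=
  Ideal.Quotient.eq.mpr (Ideal.mem_span_singleton.mpr h)

lemma phi_eq_zero_of_dvd (d : ℕ) {x : R} (h : (X:R)^(d+1) ∣ x) : φ d x = 0 :=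
  Ideal.Quotient.eq_zero_iff_mem.mpr (Ideal.mem_span_singleton.mpr h)

lemma phi_X_pow (d m : ℕ) (h : d < m) : φ d ((X:R)^m) = 0 :=
  phi_eq_zero_of_dvd d (pow_dvd_pow X h)

/-- `sterm N j = (-1)^j X^(T j + N j) / (q;q)_j`. -/
def sterm (N j : ℕ) : R := (-1:R)^j * X^(T j + N*j) * Ring.inverse (qPoch j)

def U (d N : ℕ) : R := ∑ j ∈ Finset.range (d+1), sterm N j

lemma sterm_zero (N : ℕ) : sterm N 0 = 1 := by
  unfold sterm T qPoch
  simp [Ring.inverse_one]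

lemma T_succ (i : ℕ) : T (i+1) = T i + (i+1) := by
  unfold T
  have h2 : (i+1)*(i+1+1) = i*(i+1)+2*(i+1) := by ring
  omega

lemma sterm_diff (N i : ℕ) :
    sterm N (i+1) - sterm (N+1) (i+1) = -((X:R)^(N+1) * sterm (N+1) i) := by
  have hx1 : (X:R)^(T (i+1) + (N+1)*(i+1)) = X^(T (i+1) + N*(i+1)) * X^(i+1) := by
    rw [← pow_add]; congr 1; ring
  have hx2 : (X:R)^(T (i+1) + N*(i+1)) = X^(N+1) * X^(T i + (N+1)*i) := by
    rw [← pow_add]; congr 1; rw [T_succ]; ring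
  calc sterm N (i+1) - sterm (N+1) (i+1)
      = (-1:R)^(i+1) * X^(T (i+1) + N*(i+1)) *
          ((1 - X^(i+1)) * Ring.inverse (qPoch (i+1))) := by
        unfold sterm; rw [hx1]; ring
    _ = -((X:R)^(N+1) * sterm (N+1) i) := by
        rw [inv_qPoch_mul, hx2]; unfold sterm; ring

lemma U_rec (d N : ℕ) :
    U d N = (1 - (X:R)^(N+1)) * U d (N+1) + (X:R)^(N+1) * sterm (N+1) d := by
  have key : U d N - U d (N+1) = -((X:R)^(N+1) * (U d (N+1) - sterm (N+1) d)) := by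
    unfold U
    rw [← Finset.sum_sub_distrib]
    rw [Finset.sum_range_succ' (fun j => sterm N j - sterm (N+1) j) d]
    rw [sterm_zero, sterm_zero, sub_self, add_zero]
    have hc : ∀ i ∈ Finset.range d, sterm N (i+1) - sterm (N+1) (i+1)
        = -((X:R)^(N+1) * sterm (N+1) i) := fun i _ => sterm_diff N i
    rw [Finset.sum_congr rfl hc, Finset.sum_neg_distrib, ← Finset.mul_sum,
      Finset.sum_range_succ (fun j => sterm (N+1) j) d]
    ring
  linear_combination key

lemma euler_step (d N : ℕ) :
    φ d (qPoch N * U d N) = φ d (qPoch (N+1) * U d (N+1)) := by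
  apply phi_eq_of_dvd
  rw [U_rec d N]
  have h1 : qPoch N * ((1 - (X:R)^(N+1)) * U d (N+1) + (X:R)^(N+1) * sterm (N+1) d)
      - qPoch (N+1) * U d (N+1) = qPoch N * ((X:R)^(N+1) * sterm (N+1) d) := by
    rw [qPoch_succ]; ring
  rw [h1]
  have hdvd : (X:R)^(d+1) ∣ (X:R)^(N+1) * sterm (N+1) d := by
    unfold sterm
    have : (X:R)^(d+1) ∣ (X:R)^(N+1) * X^(T d + (N+1)*d) := by
      rw [← pow_add]
      apply pow_dvd_pow
      nlinarith [Nat.zero_le (T d)]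
    have h2 : (X:R)^(N+1) * ((-1:R)^d * X^(T d + (N+1)*d) * Ring.inverse (qPoch d))
        = ((X:R)^(N+1) * X^(T d + (N+1)*d)) * ((-1:R)^d * Ring.inverse (qPoch d)) := by ring
    rw [h2]
    exact this.mul_right _
  exact Dvd.dvd.mul_left hdvd _

lemma euler_shift (d N k : ℕ) :
    φ d (qPoch N * U d N) = φ d (qPoch (N+k) * U d (N+k)) := by
  induction k with
  | zero => rfl
  | succ k ih => rw [ih, euler_step d (N+k)]; rfl

lemma phi_qPoch_add (d k : ℕ) : φ d (qPoch (d + k)) = φ d (qPoch d) := by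
  induction k with
  | zero => rfl
  | succ k ih =>
      have : d + (k+1) = (d+k) + 1 := by ring
      rw [this, qPoch_succ, map_mul, map_sub, map_one, phi_X_pow d (d+k+1) (by omega)]
      rw [sub_zero, mul_one, ih]

lemma phi_U_top (d k : ℕ) : φ d (U d (d + k)) = 1 := by
  unfold U
  rw [Finset.sum_range_succ' (fun j => sterm (d+k) j) d, map_add, sterm_zero, map_one]
  have : ∀ i ∈ Finset.range d, φ d (sterm (d+k) (i+1)) = 0 := by
    intro i _
    apply phi_eq_zero_of_dvd
    unfold sterm
    have hd : (X:R)^(d+1) ∣ (X:R)^(T (i+1) + (d+k)*(i+1)) := by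
      apply pow_dvd_pow
      have : T (i+1) ≥ 1 := by rw [T_succ]; omega
      nlinarith
    exact (Dvd.dvd.mul_left hd _).mul_right _
  rw [map_sum, Finset.sum_congr rfl this]
  simp

lemma euler (d N : ℕ) : φ d (qPoch N * U d N) = φ d (qPoch d) := by
  rw [euler_shift d N d, map_mul]
  have h1 : N + d = d + N := by ring
  rw [h1, phi_U_top d N, mul_one, phi_qPoch_add d N]

def hterm (a b n j : ℕ) : R :=
  (-1:R)^(n+j) * X^(T n + b*n + (T j + (n+a)*j)) *
    (Ring.inverse (qPoch n) * Ring.inverse (qPoch j))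

lemma key (d a b n : ℕ) :
    φ d (qPoch d * ((-1:R)^n * X^(T n + b*n) * Ring.inverse (qPoch n * qPoch (n+a))))
    = ∑ j ∈ Finset.range (d+1), φ d (hterm a b n j) := by
  rw [map_mul, ← euler d (n+a), ← map_mul]
  have h1 : qPoch (n+a) * U d (n+a) *
      ((-1:R)^n * X^(T n + b*n) * Ring.inverse (qPoch n * qPoch (n+a)))
      = (qPoch (n+a) * Ring.inverse (qPoch (n+a))) *
        ((-1:R)^n * X^(T n + b*n) * Ring.inverse (qPoch n) * U d (n+a)) := by
    rw [Ring.mul_inverse_rev]; ring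
  rw [h1, Ring.mul_inverse_cancel _ (qPoch_isUnit (n+a)), one_mul]
  unfold U
  rw [Finset.mul_sum, map_sum]
  apply Finset.sum_congr rfl
  intro j _
  congr 1
  unfold sterm hterm
  rw [pow_add (-1:R) n j, pow_add (X:R) (T n + b*n) (T j + (n+a)*j)]
  ring

lemma hterm_symm (a b n j : ℕ) : hterm a b n j = hterm b a j n := by
  unfold hterm
  have e : T n + b*n + (T j + (n+a)*j) = T j + a*j + (T n + (j+b)*n) := by ring
  rw [e, add_comm n j]
  ring

lemma phi_SeriesSum (d : ℕ) (f : ℕ → R) (hf : ∀ k, (X:R)^k ∣ f k) :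
    φ d (SeriesSum f) = φ d (∑ k ∈ Finset.range (d+1), f k) := by
  apply phi_eq_of_dvd
  rw [PowerSeries.X_pow_dvd_iff]
  intro m hm
  rw [map_sub]
  have h1 : coeff m (SeriesSum f) = ∑ k ∈ Finset.range (m+1), coeff m (f k) := by
    unfold SeriesSum; rw [coeff_mk]
  have h2 : ∑ k ∈ Finset.range (m+1), coeff m (f k)
      = ∑ k ∈ Finset.range (d+1), coeff m (f k) := by
    apply Finset.sum_subset (Finset.range_subset_range.mpr (by omega))
    intro k _ hk2
    simp only [Finset.mem_range] at hk2
    exact PowerSeries.X_pow_dvd_iff.mp (hf k) m (by omega)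
  rw [h1, map_sum, h2, sub_self]

lemma dvd_of_phi_eq (d : ℕ) {x y : R} (h : φ d x = φ d y) : (X:R)^(d+1) ∣ x - y :=
  Ideal.mem_span_singleton.mp (Ideal.Quotient.eq.mp h)

lemma main (a b d : ℕ) :
    coeff d (SeriesSum (fun n => (-1:R)^n * X^(T n + b*n) *
        Ring.inverse (qPoch n * qPoch (n+a))))
    = coeff d (SeriesSum (fun n => (-1:R)^n * X^(T n + a*n) *
        Ring.inverse (qPoch n * qPoch (n+b)))) := by
  set f1 : ℕ → R := fun n => (-1:R)^n * X^(T n + b*n) * Ring.inverse (qPoch n * qPoch (n+a)) with hf1def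
  set f2 : ℕ → R := fun n => (-1:R)^n * X^(T n + a*n) * Ring.inverse (qPoch n * qPoch (n+b)) with hf2def
  have hdl : ∀ (c c' : ℕ) (k : ℕ), (X:R)^k ∣ (-1:R)^k * X^(T k + c*k) * Ring.inverse (qPoch k * qPoch (k+c')) := by
    intro c c' k
    have hle : k ≤ T k + c*k := by
      unfold T
      rcases Nat.eq_zero_or_pos k with h|h
      · subst h; simp
      · have h2 : k*2 ≤ k*(k+1) := Nat.mul_le_mul_left k (by omega)
        omega
    exact ((pow_dvd_pow (X:R) hle).mul_left _).mul_right _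
  have h1 := phi_SeriesSum d f1 (hdl b a)
  have h2 := phi_SeriesSum d f2 (hdl a b)
  have hkey : φ d (qPoch d * ∑ n ∈ Finset.range (d+1), f1 n)
      = φ d (qPoch d * ∑ n ∈ Finset.range (d+1), f2 n) := by
    rw [Finset.mul_sum, Finset.mul_sum, map_sum, map_sum]
    have e1 : ∀ n ∈ Finset.range (d+1), φ d (qPoch d * f1 n)
        = ∑ j ∈ Finset.range (d+1), φ d (hterm a b n j) := fun n _ => key d a b n
    have e2 : ∀ n ∈ Finset.range (d+1), φ d (qPoch d * f2 n)
        = ∑ j ∈ Finset.range (d+1), φ d (hterm b a n j) := fun n _ => key d b a n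
    rw [Finset.sum_congr rfl e1, Finset.sum_congr rfl e2, Finset.sum_comm]
    apply Finset.sum_congr rfl
    intro x _
    apply Finset.sum_congr rfl
    intro y _
    rw [hterm_symm a b y x]
  have hmul : φ d (qPoch d) * φ d (SeriesSum f1) = φ d (qPoch d) * φ d (SeriesSum f2) := by
    rw [h1, h2, ← map_mul, ← map_mul, hkey]
  have hu : IsUnit (φ d (qPoch d)) := (qPoch_isUnit d).map (φ d)
  have heq : φ d (SeriesSum f1) = φ d (SeriesSum f2) := hu.mul_left_cancel hmul
  have hdvd := dvd_of_phi_eq d heq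
  have hc := PowerSeries.X_pow_dvd_iff.mp hdvd d (by omega)
  rw [map_sub] at hc
  exact sub_eq_zero.mp hc

end Stmt10Aux

theorem stmt10 (a b : ℕ) :
    SeriesSum (fun n => (-1 : PowerSeries ℤ) ^ n *
        X ^ (n * (n + 1) / 2 + b * n) *
        Ring.inverse (qPoch n * qPoch (n + a)))
    = SeriesSum (fun n => (-1 : PowerSeries ℤ) ^ n *
        X ^ (n * (n + 1) / 2 + a * n) *
        Ring.inverse (qPoch n * qPoch (n + b))) := by
  apply PowerSeries.ext
  intro d
  exact Stmt10Aux.main a b d
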